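/- Let K ≥ 1, let u^{(1)}, …, u^{(K)} ∈ ℝ^n, and define F : 𝒞_n → ℝ by F(x) = Π_{k=1}^K ⟨u^{(k)}, x⟩². Then the derivative matrix of F satisfies ‖D^F‖_op ≤ 2K(2K−1) n^{K−1} Π_{k=1}^K ‖u^{(k)}‖₂². -/

import Mathlib

noncomputable section

open scoped BigOperators

/-- The point of the Boolean hypercube associated with a Boolean string. -/
def sgnVec {n : ℕ} (b : Fin n → Bool) : Fin n → ℝ := fun i => if b i then 1 else -1

/-- Euclidean inner product on ℝ^n. -/
def dotR {n : ℕ} (u x : Fin n → ℝ) : ℝ := ∑ i, u i * x i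

/-- Discrete derivative on the cube: `∂_i F(x) = (F(x^{i+}) − F(x^{i−}))/2`. -/
def dderiv {n : ℕ} (F : (Fin n → Bool) → ℝ) (i : Fin n) (b : Fin n → Bool) : ℝ :=
  (F (Function.update b i true) - F (Function.update b i false)) / 2

/-- The derivative matrix `D^F_{ij} = max_x |∂_i ∂_j F(x)|`. -/
def derivMat {n : ℕ} (F : (Fin n → Bool) → ℝ) (i j : Fin n) : ℝ :=
  ⨆ b : Fin n → Bool, |dderiv (dderiv F j) i b|

/-- The `ℓ²→ℓ²` operator norm of an `n×n` matrix. -/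
def matOpNorm {n : ℕ} (M : Fin n → Fin n → ℝ) : ℝ :=
  sSup { r : ℝ | ∃ x : Fin n → ℝ, (∑ i, x i ^ 2) = 1 ∧
    r = Real.sqrt (∑ i, (∑ j, M i j * x j) ^ 2) }

namespace DerivMatAux

open Finset

/- ## Generic inequalities -/

lemma euc_sum_apply {ι P : Type*} [Fintype ι] (s : Finset P) (f : P → ι → ℝ) (i : ι) :
    (∑ p ∈ s, (WithLp.equiv 2 (ι → ℝ)).symm (f p)) i = ∑ p ∈ s, f p i := by
  classical
  induction s using Finset.induction with
  | empty => rfl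
  | insert _ _ hns ih => rw [Finset.sum_insert hns, Finset.sum_insert hns, ← ih]; rfl

/-- Minkowski's inequality for finite sums. -/
lemma minkowski {ι P : Type*} [Fintype ι] (s : Finset P) (f : P → ι → ℝ) :
    Real.sqrt (∑ i, (∑ p ∈ s, f p i) ^ 2) ≤ ∑ p ∈ s, Real.sqrt (∑ i, f p i ^ 2) := by
  classical
  have h := norm_sum_le (E := EuclideanSpace ℝ ι) s
    (fun p => (WithLp.equiv 2 (ι → ℝ)).symm (f p))
  simp only [EuclideanSpace.norm_eq, Real.norm_eq_abs, sq_abs] at h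
  refine le_trans (le_of_eq ?_) h
  congr 1
  exact Finset.sum_congr rfl fun i _ => by rw [euc_sum_apply]

lemma abs_prod_le {ι : Type*} (s : Finset ι) (f M : ι → ℝ)
    (hf : ∀ k ∈ s, |f k| ≤ M k) : |∏ k ∈ s, f k| ≤ ∏ k ∈ s, M k := by
  rw [Finset.abs_prod]
  exact Finset.prod_le_prod (fun k _ => abs_nonneg _) hf

lemma prod_diff_bound {ι : Type*} [DecidableEq ι] (s : Finset ι) (f g M P : ι → ℝ)
    (hM0 : ∀ k, 0 ≤ M k)
    (hf : ∀ k ∈ s, |f k| ≤ M k) (hg : ∀ k ∈ s, |g k| ≤ M k)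
    (hd : ∀ k ∈ s, |f k - g k| ≤ P k) :
    |∏ k ∈ s, f k - ∏ k ∈ s, g k| ≤ ∑ k ∈ s, P k * ∏ l ∈ s.erase k, M l := by
  classical
  induction s using Finset.induction with
  | empty => simp
  | @insert a s hns ih =>
    have hfa := hf a (mem_insert_self a s)
    have hda := hd a (mem_insert_self a s)
    have hf' : ∀ k ∈ s, |f k| ≤ M k := fun k hk => hf k (mem_insert_of_mem hk)
    have hg' : ∀ k ∈ s, |g k| ≤ M k := fun k hk => hg k (mem_insert_of_mem hk)
    have hd' : ∀ k ∈ s, |f k - g k| ≤ P k := fun k hk => hd k (mem_insert_of_mem hk)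
    have IH := ih hf' hg' hd'
    have hPg : |∏ k ∈ s, g k| ≤ ∏ k ∈ s, M k := abs_prod_le s g M hg'
    rw [Finset.prod_insert hns, Finset.prod_insert hns]
    have key : f a * ∏ k ∈ s, f k - g a * ∏ k ∈ s, g k
        = f a * (∏ k ∈ s, f k - ∏ k ∈ s, g k) + (f a - g a) * ∏ k ∈ s, g k := by ring
    rw [key]
    have h1 : |f a * (∏ k ∈ s, f k - ∏ k ∈ s, g k)|
        ≤ M a * ∑ k ∈ s, P k * ∏ l ∈ s.erase k, M l := by
      rw [abs_mul]
      exact mul_le_mul hfa IH (abs_nonneg _) (hM0 a)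
    have h2 : |(f a - g a) * ∏ k ∈ s, g k| ≤ P a * ∏ l ∈ s, M l := by
      rw [abs_mul]
      exact mul_le_mul hda hPg (abs_nonneg _) (le_trans (abs_nonneg _) hda)
    calc |_ + _| ≤ _ := abs_add_le _ _
      _ ≤ M a * ∑ k ∈ s, P k * ∏ l ∈ s.erase k, M l + P a * ∏ l ∈ s, M l := add_le_add h1 h2
      _ = ∑ k ∈ insert a s, P k * ∏ l ∈ (insert a s).erase k, M l := by
          rw [Finset.sum_insert hns, Finset.erase_insert hns, Finset.mul_sum]
          rw [add_comm]
          congr 1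
          refine Finset.sum_congr rfl fun k hk => ?_
          have hka : k ≠ a := fun h => hns (h ▸ hk)
          rw [Finset.erase_insert_of_ne hka.symm,
            Finset.prod_insert (fun h => hns (Finset.erase_subset _ _ h))]
          ring

lemma prod_diff2_bound {ι : Type*} [DecidableEq ι] (s : Finset ι)
    (h : ι → Bool → Bool → ℝ) (M P Q R : ι → ℝ)
    (hM0 : ∀ k, 0 ≤ M k) (hP0 : ∀ k, 0 ≤ P k) (hQ0 : ∀ k, 0 ≤ Q k) (hR0 : ∀ k, 0 ≤ R k)
    (hM : ∀ k ∈ s, ∀ ε δ, |h k ε δ| ≤ M k)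
    (hP : ∀ k ∈ s, ∀ δ, |h k true δ - h k false δ| ≤ P k)
    (hQ : ∀ k ∈ s, ∀ ε, |h k ε true - h k ε false| ≤ Q k)
    (hR : ∀ k ∈ s, |h k true true - h k true false - h k false true + h k false false| ≤ R k) :
    |∏ k ∈ s, h k true true - ∏ k ∈ s, h k true false
      - ∏ k ∈ s, h k false true + ∏ k ∈ s, h k false false| ≤
      ∑ k ∈ s, R k * ∏ l ∈ s.erase k, M l
        + ∑ k ∈ s, ∑ m ∈ s.erase k, P k * Q m * ∏ l ∈ (s.erase k).erase m, M l := by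
  classical
  induction s using Finset.induction with
  | empty => simp
  | @insert a s hns ih =>
    have mem_a := Finset.mem_insert_self a s
    have hM' : ∀ k ∈ s, ∀ ε δ, |h k ε δ| ≤ M k := fun k hk => hM k (mem_insert_of_mem hk)
    have hP' : ∀ k ∈ s, ∀ δ, |h k true δ - h k false δ| ≤ P k :=
      fun k hk => hP k (mem_insert_of_mem hk)
    have hQ' : ∀ k ∈ s, ∀ ε, |h k ε true - h k ε false| ≤ Q k :=
      fun k hk => hQ k (mem_insert_of_mem hk)
    have hR' : ∀ k ∈ s,
        |h k true true - h k true false - h k false true + h k false false| ≤ R k :=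
      fun k hk => hR k (mem_insert_of_mem hk)
    have IH := ih hM' hP' hQ' hR'
    have hdQ : |∏ k ∈ s, h k false true - ∏ k ∈ s, h k false false|
        ≤ ∑ k ∈ s, Q k * ∏ l ∈ s.erase k, M l :=
      prod_diff_bound s _ _ M Q hM0 (fun k hk => hM' k hk false true)
        (fun k hk => hM' k hk false false) (fun k hk => hQ' k hk false)
    have hdP : |∏ k ∈ s, h k true false - ∏ k ∈ s, h k false false|
        ≤ ∑ k ∈ s, P k * ∏ l ∈ s.erase k, M l :=
      prod_diff_bound s (fun k => h k true false) (fun k => h k false false) M P hM0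
        (fun k hk => hM' k hk true false) (fun k hk => hM' k hk false false)
        (fun k hk => hP' k hk false)
    have hprod : |∏ k ∈ s, h k true false| ≤ ∏ l ∈ s, M l :=
      abs_prod_le s _ M (fun k hk => hM' k hk true false)
    rw [Finset.prod_insert hns, Finset.prod_insert hns, Finset.prod_insert hns,
      Finset.prod_insert hns]
    set A := ∏ k ∈ s, h k true true
    set B := ∏ k ∈ s, h k true false
    set C := ∏ k ∈ s, h k false true
    set D := ∏ k ∈ s, h k false false
    have key : h a true true * A - h a true false * B - h a false true * C + h a false false * D
        = h a true true * (A - B - C + D)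
          + (h a true true - h a false true) * (C - D)
          + (h a true true - h a true false - h a false true + h a false false) * B
          + (h a false true - h a false false) * (B - D) := by ring
    rw [key]
    have t1 : |h a true true * (A - B - C + D)|
        ≤ M a * (∑ k ∈ s, R k * ∏ l ∈ s.erase k, M l
          + ∑ k ∈ s, ∑ m ∈ s.erase k, P k * Q m * ∏ l ∈ (s.erase k).erase m, M l) := by
      rw [abs_mul]; exact mul_le_mul (hM a mem_a true true) IH (abs_nonneg _) (hM0 a)
    have t2 : |(h a true true - h a false true) * (C - D)|
        ≤ P a * ∑ k ∈ s, Q k * ∏ l ∈ s.erase k, M l := by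
      rw [abs_mul]; exact mul_le_mul (hP a mem_a true) hdQ (abs_nonneg _) (hP0 a)
    have t3 : |(h a true true - h a true false - h a false true + h a false false) * B|
        ≤ R a * ∏ l ∈ s, M l := by
      rw [abs_mul]; exact mul_le_mul (hR a mem_a) hprod (abs_nonneg _) (hR0 a)
    have t4 : |(h a false true - h a false false) * (B - D)|
        ≤ Q a * ∑ k ∈ s, P k * ∏ l ∈ s.erase k, M l := by
      rw [abs_mul]; exact mul_le_mul (hQ a mem_a false) hdP (abs_nonneg _) (hQ0 a)
    set x1 := h a true true * (A - B - C + D)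
    set x2 := (h a true true - h a false true) * (C - D)
    set x3 := (h a true true - h a true false - h a false true + h a false false) * B
    set x4 := (h a false true - h a false false) * (B - D)
    have tri : |x1 + x2 + x3 + x4|
        ≤ M a * (∑ k ∈ s, R k * ∏ l ∈ s.erase k, M l
            + ∑ k ∈ s, ∑ m ∈ s.erase k, P k * Q m * ∏ l ∈ (s.erase k).erase m, M l)
          + P a * ∑ k ∈ s, Q k * ∏ l ∈ s.erase k, M l
          + R a * ∏ l ∈ s, M l
          + Q a * ∑ k ∈ s, P k * ∏ l ∈ s.erase k, M l :=
      (abs_add_le (x1 + x2 + x3) x4).trans (add_le_add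
        ((abs_add_le (x1 + x2) x3).trans (add_le_add
          ((abs_add_le x1 x2).trans (add_le_add t1 t2)) t3)) t4)
    refine tri.trans (le_of_eq ?_)
    have erase_ins : (insert a s).erase a = s := Finset.erase_insert hns
    have hins : ∀ k ∈ s, (insert a s).erase k = insert a (s.erase k) := fun k hk =>
      Finset.erase_insert_of_ne (fun h => hns (h ▸ hk))
    rw [Finset.sum_insert hns, Finset.sum_insert hns, erase_ins]
    have e1 : ∑ k ∈ s, R k * ∏ l ∈ (insert a s).erase k, M l
        = M a * ∑ k ∈ s, R k * ∏ l ∈ s.erase k, M l := by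
      rw [Finset.mul_sum]
      refine Finset.sum_congr rfl fun k hk => ?_
      rw [hins k hk, Finset.prod_insert (fun h => hns (Finset.erase_subset _ _ h))]
      ring
    have e2 : ∑ m ∈ s, P a * Q m * ∏ l ∈ s.erase m, M l
        = P a * ∑ k ∈ s, Q k * ∏ l ∈ s.erase k, M l := by
      rw [Finset.mul_sum]; exact Finset.sum_congr rfl fun k hk => by ring
    have e3 : ∀ k ∈ s,
        ∑ m ∈ (insert a s).erase k, P k * Q m * ∏ l ∈ ((insert a s).erase k).erase m, M l
        = P k * Q a * ∏ l ∈ s.erase k, M l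
          + M a * ∑ m ∈ s.erase k, P k * Q m * ∏ l ∈ (s.erase k).erase m, M l := by
      intro k hk
      have hak : a ∉ s.erase k := fun h => hns (Finset.erase_subset _ _ h)
      rw [hins k hk, Finset.sum_insert hak, Finset.erase_insert hak, Finset.mul_sum]
      congr 1
      refine Finset.sum_congr rfl fun m hm => ?_
      have hma : m ≠ a := fun h => hak (h ▸ hm)
      rw [Finset.erase_insert_of_ne hma.symm,
        Finset.prod_insert (fun h => hak (Finset.erase_subset _ _ h))]
      ring
    rw [Finset.sum_congr rfl e3, Finset.sum_add_distrib, e1, e2]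
    have e4 : ∑ k ∈ s, M a * ∑ m ∈ s.erase k, P k * Q m * ∏ l ∈ (s.erase k).erase m, M l
        = M a * ∑ k ∈ s, ∑ m ∈ s.erase k, P k * Q m * ∏ l ∈ (s.erase k).erase m, M l := by
      rw [Finset.mul_sum]
    have e5 : ∑ k ∈ s, P k * Q a * ∏ l ∈ s.erase k, M l
        = Q a * ∑ k ∈ s, P k * ∏ l ∈ s.erase k, M l := by
      rw [Finset.mul_sum]; exact Finset.sum_congr rfl fun k hk => by ring
    rw [e4, e5]
    ring

/- ## Dot product computations on the cube -/

variable {n : ℕ}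

lemma sgnVec_sq (b : Fin n → Bool) (i : Fin n) : sgnVec b i ^ 2 = 1 := by
  unfold sgnVec; split <;> norm_num

lemma dot_update (u : Fin n → ℝ) (c : Fin n → Bool) (i : Fin n) (ε : Bool) :
    dotR u (sgnVec (Function.update c i ε))
      = (∑ l ∈ Finset.univ.erase i, u l * sgnVec c l) + (if ε then u i else -u i) := by
  unfold dotR
  rw [← Finset.add_sum_erase _ _ (Finset.mem_univ i)]
  rw [add_comm]
  congr 1
  · refine Finset.sum_congr rfl fun l hl => ?_
    have : l ≠ i := Finset.ne_of_mem_erase hl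
    simp [sgnVec, Function.update_of_ne this]
  · simp only [sgnVec, Function.update_self]
    cases ε <;> simp

lemma sum_sq_sgn_le (c : Fin n → Bool) (s : Finset (Fin n)) :
    ∑ l ∈ s, sgnVec c l ^ 2 ≤ (n : ℝ) := by
  have : ∑ l ∈ s, sgnVec c l ^ 2 = (s.card : ℝ) := by
    rw [Finset.sum_congr rfl fun l _ => sgnVec_sq c l, Finset.sum_const, nsmul_eq_mul, mul_one]
  rw [this]
  exact_mod_cast Nat.cast_le.mpr
    ((Finset.card_le_card (Finset.subset_univ s)).trans (by simp))

lemma rest_sq_le (u : Fin n → ℝ) (c : Fin n → Bool) (s : Finset (Fin n)) :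
    (∑ l ∈ s, u l * sgnVec c l) ^ 2 ≤ (n : ℝ) * ∑ i, u i ^ 2 := by
  have CS := Finset.sum_mul_sq_le_sq_mul_sq s u (sgnVec c)
  refine CS.trans ?_
  rw [mul_comm]
  have h1 : ∑ l ∈ s, u l ^ 2 ≤ ∑ i, u i ^ 2 :=
    Finset.sum_le_sum_of_subset_of_nonneg (Finset.subset_univ s) (fun i _ _ => sq_nonneg _)
  have h2 := sum_sq_sgn_le c s
  exact mul_le_mul h2 h1 (Finset.sum_nonneg fun i _ => sq_nonneg _) (Nat.cast_nonneg n)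

lemma rest_abs_le (u : Fin n → ℝ) (c : Fin n → Bool) (s : Finset (Fin n)) :
    |∑ l ∈ s, u l * sgnVec c l| ≤ Real.sqrt n * Real.sqrt (∑ i, u i ^ 2) := by
  rw [← Real.sqrt_sq_eq_abs, ← Real.sqrt_mul (Nat.cast_nonneg n)]
  exact Real.sqrt_le_sqrt (rest_sq_le u c s)

lemma dot_sq_le (u : Fin n → ℝ) (c : Fin n → Bool) :
    dotR u (sgnVec c) ^ 2 ≤ (n : ℝ) * ∑ i, u i ^ 2 := by
  have := rest_sq_le u c Finset.univ
  simpa [dotR] using this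

/- ## Entrywise bound -/

lemma entry_bound {K : ℕ} (u : Fin K → Fin n → ℝ) (i j : Fin n) (b : Fin n → Bool) :
    |dderiv (dderiv (fun b => ∏ k, dotR (u k) (sgnVec b) ^ 2) j) i b| ≤
      (1/4) * (∑ k, (8 * |u k i| * |u k j|) * ∏ l ∈ Finset.univ.erase k,
          ((n : ℝ) * ∑ r, u l r ^ 2)
        + ∑ k, ∑ m ∈ Finset.univ.erase k,
            (4 * |u k i| * (Real.sqrt n * Real.sqrt (∑ r, u k r ^ 2)))
            * (4 * |u m j| * (Real.sqrt n * Real.sqrt (∑ r, u m r ^ 2)))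
            * ∏ l ∈ (Finset.univ.erase k).erase m, ((n : ℝ) * ∑ r, u l r ^ 2)) := by
  classical
  set h : Fin K → Bool → Bool → ℝ := fun k ε δ =>
    dotR (u k) (sgnVec (Function.update (Function.update b i ε) j δ)) ^ 2 with hh
  have hdd : dderiv (dderiv (fun b => ∏ k, dotR (u k) (sgnVec b) ^ 2) j) i b
      = (∏ k, h k true true - ∏ k, h k true false
          - ∏ k, h k false true + ∏ k, h k false false) / 4 := by
    simp only [dderiv, hh]
    ring
  have hM0 : ∀ k, (0:ℝ) ≤ (n : ℝ) * ∑ r, u k r ^ 2 := fun k => by positivity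
  have hP0 : ∀ k, (0:ℝ) ≤ 4 * |u k i| * (Real.sqrt n * Real.sqrt (∑ r, u k r ^ 2)) :=
    fun k => by positivity
  have hQ0 : ∀ k, (0:ℝ) ≤ 4 * |u k j| * (Real.sqrt n * Real.sqrt (∑ r, u k r ^ 2)) :=
    fun k => by positivity
  have hR0 : ∀ k, (0:ℝ) ≤ 8 * |u k i| * |u k j| := fun k => by positivity
  have hM : ∀ k ∈ Finset.univ (α := Fin K), ∀ ε δ, |h k ε δ| ≤ (n : ℝ) * ∑ r, u k r ^ 2 := by
    intro k _ ε δ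
    rw [hh]
    simp only
    rw [abs_of_nonneg (sq_nonneg _)]
    exact dot_sq_le _ _
  have hQ : ∀ k ∈ Finset.univ (α := Fin K), ∀ ε,
      |h k ε true - h k ε false| ≤ 4 * |u k j| * (Real.sqrt n * Real.sqrt (∑ r, u k r ^ 2)) := by
    intro k _ ε
    have e1 := dot_update (u k) (Function.update b i ε) j true
    have e2 := dot_update (u k) (Function.update b i ε) j false
    have key : h k ε true - h k ε false
        = 4 * u k j * ∑ l ∈ Finset.univ.erase j, u k l * sgnVec (Function.update b i ε) l := by
      rw [hh]; simp only; rw [e1, e2]; simp only [eq_self_iff_true, if_true, if_neg (by simp : ¬(false = true))]; ring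
    rw [key]
    calc |4 * u k j * ∑ l ∈ Finset.univ.erase j, u k l * sgnVec (Function.update b i ε) l|
        = 4 * |u k j| * |∑ l ∈ Finset.univ.erase j, u k l * sgnVec (Function.update b i ε) l| := by
          rw [abs_mul, abs_mul, abs_of_nonneg (by norm_num : (0:ℝ) ≤ 4)]
      _ ≤ 4 * |u k j| * (Real.sqrt n * Real.sqrt (∑ r, u k r ^ 2)) := by
          gcongr
          exact rest_abs_le _ _ _
  have hP : ∀ k ∈ Finset.univ (α := Fin K), ∀ δ,
      |h k true δ - h k false δ| ≤ 4 * |u k i| * (Real.sqrt n * Real.sqrt (∑ r, u k r ^ 2)) := by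
    intro k _ δ
    by_cases hij : i = j
    · subst hij
      have : ∀ ε : Bool, h k ε δ = dotR (u k) (sgnVec (Function.update b i δ)) ^ 2 := by
        intro ε; rw [hh]; simp only [Function.update_idem]
      rw [this true, this false, sub_self, abs_zero]
      exact hP0 k
    · have comm : ∀ ε δ' : Bool, Function.update (Function.update b i ε) j δ'
          = Function.update (Function.update b j δ') i ε := fun ε δ' =>
        Function.update_comm hij ε δ' b
      have e1 := dot_update (u k) (Function.update b j δ) i true
      have e2 := dot_update (u k) (Function.update b j δ) i false
      have key : h k true δ - h k false δ
          = 4 * u k i * ∑ l ∈ Finset.univ.erase i, u k l * sgnVec (Function.update b j δ) l := by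
        rw [hh]; simp only; rw [comm true δ, comm false δ, e1, e2]
        simp only [eq_self_iff_true, if_true, if_neg (by simp : ¬(false = true))]; ring
      rw [key]
      calc |4 * u k i * ∑ l ∈ Finset.univ.erase i, u k l * sgnVec (Function.update b j δ) l|
          = 4 * |u k i| * |∑ l ∈ Finset.univ.erase i, u k l * sgnVec (Function.update b j δ) l| := by
            rw [abs_mul, abs_mul, abs_of_nonneg (by norm_num : (0:ℝ) ≤ 4)]
        _ ≤ 4 * |u k i| * (Real.sqrt n * Real.sqrt (∑ r, u k r ^ 2)) := by
            gcongr
            exact rest_abs_le _ _ _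
  have hR : ∀ k ∈ Finset.univ (α := Fin K),
      |h k true true - h k true false - h k false true + h k false false|
        ≤ 8 * |u k i| * |u k j| := by
    intro k _
    by_cases hij : i = j
    · subst hij
      have : ∀ ε δ : Bool, h k ε δ = dotR (u k) (sgnVec (Function.update b i δ)) ^ 2 := by
        intro ε δ; rw [hh]; simp only [Function.update_idem]
      rw [this true true, this true false, this false true, this false false]
      rw [show dotR (u k) (sgnVec (Function.update b i true)) ^ 2
          - dotR (u k) (sgnVec (Function.update b i false)) ^ 2
          - dotR (u k) (sgnVec (Function.update b i true)) ^ 2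
          + dotR (u k) (sgnVec (Function.update b i false)) ^ 2 = 0 from by ring, abs_zero]
      exact hR0 k
    · have hji : j ≠ i := fun hx => hij hx.symm
      have hi_mem : i ∈ Finset.univ.erase j := Finset.mem_erase.mpr ⟨hij, Finset.mem_univ i⟩
      set w : ℝ := ∑ l ∈ (Finset.univ.erase j).erase i, u k l * sgnVec b l with hw
      have key : ∀ ε δ : Bool, dotR (u k) (sgnVec (Function.update (Function.update b i ε) j δ))
          = w + (if ε then u k i else -u k i) + (if δ then u k j else -u k j) := by
        intro ε δ
        rw [dot_update]
        have inner : ∑ l ∈ Finset.univ.erase j, u k l * sgnVec (Function.update b i ε) l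
            = u k i * sgnVec (Function.update b i ε) i + w := by
          rw [← Finset.add_sum_erase _ _ hi_mem]
          congr 1
          refine Finset.sum_congr rfl fun l hl => ?_
          have : l ≠ i := Finset.ne_of_mem_erase hl
          simp [sgnVec, Function.update_of_ne this]
        rw [inner]
        have : u k i * sgnVec (Function.update b i ε) i = (if ε then u k i else -u k i) := by
          simp only [sgnVec, Function.update_self]
          cases ε <;> simp
        rw [this]
        ring
      have expand : h k true true - h k true false - h k false true + h k false false
          = 8 * u k i * u k j := by
        rw [hh]
        simp only
        rw [key true true, key true false, key false true, key false false]
        simp only [eq_self_iff_true, if_true, if_neg (by simp : ¬(false = true))]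
        ring
      rw [expand]
      exact le_of_eq (by rw [abs_mul, abs_mul, abs_of_nonneg (by norm_num : (0:ℝ) ≤ 8)])
  have main := prod_diff2_bound Finset.univ h _ _ _ _ hM0 hP0 hQ0 hR0 hM hP hQ hR
  rw [hdd, abs_div, abs_of_nonneg (by norm_num : (0:ℝ) ≤ 4)]
  linarith [main]

/-- Operator norm is at most the Frobenius norm. -/
lemma opNorm_le_frob {n : ℕ} (M : Fin n → Fin n → ℝ) :
    matOpNorm M ≤ Real.sqrt (∑ i, ∑ j, M i j ^ 2) := by
  apply Real.sSup_le
  · rintro r ⟨x, hx, rfl⟩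
    apply Real.sqrt_le_sqrt
    refine Finset.sum_le_sum fun i _ => ?_
    calc (∑ j, M i j * x j) ^ 2
        ≤ (∑ j, M i j ^ 2) * ∑ j, x j ^ 2 := Finset.sum_mul_sq_le_sq_mul_sq _ _ _
      _ = ∑ j, M i j ^ 2 := by rw [hx, mul_one]
  · exact Real.sqrt_nonneg _

/-- Coefficient of the dominating rank-one decomposition. -/
def coef {n K : ℕ} (u : Fin K → Fin n → ℝ) (k m : Fin K) : ℝ :=
  if k = m then 2 * (n : ℝ) ^ (K - 1) * ∏ l ∈ Finset.univ.erase k, (∑ r, u l r ^ 2)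
  else 4 * (n : ℝ) ^ (K - 1) * Real.sqrt (∑ r, u k r ^ 2) * Real.sqrt (∑ r, u m r ^ 2)
    * ∏ l ∈ (Finset.univ.erase k).erase m, (∑ r, u l r ^ 2)

lemma coef_nonneg {K : ℕ} (u : Fin K → Fin n → ℝ) (k m : Fin K) : 0 ≤ coef u k m := by
  unfold coef
  have h1 : ∀ (s : Finset (Fin K)), 0 ≤ ∏ l ∈ s, (∑ r, u l r ^ 2) :=
    fun s => Finset.prod_nonneg fun l _ => Finset.sum_nonneg fun r _ => sq_nonneg _
  split <;> positivity

lemma sqrt_sum_rankone {K : ℕ} (u : Fin K → Fin n → ℝ) (k m : Fin K) :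
    Real.sqrt (∑ q : Fin n × Fin n, (coef u k m * |u k q.1| * |u m q.2|) ^ 2)
      = coef u k m * Real.sqrt (∑ r, u k r ^ 2) * Real.sqrt (∑ r, u m r ^ 2) := by
  have hsum : ∑ q : Fin n × Fin n, (coef u k m * |u k q.1| * |u m q.2|) ^ 2
      = coef u k m ^ 2 * ((∑ r, u k r ^ 2) * (∑ r, u m r ^ 2)) := by
    rw [Fintype.sum_prod_type]
    rw [Finset.sum_mul_sum (Finset.univ) (Finset.univ) (fun r => u k r ^ 2) (fun r => u m r ^ 2),
      Finset.mul_sum]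
    refine Finset.sum_congr rfl fun i _ => ?_
    rw [Finset.mul_sum]
    refine Finset.sum_congr rfl fun j _ => ?_
    rw [mul_pow, mul_pow, sq_abs, sq_abs]
    ring
  rw [hsum, Real.sqrt_mul (sq_nonneg _), Real.sqrt_sq (coef_nonneg u k m),
    Real.sqrt_mul (Finset.sum_nonneg fun r _ => sq_nonneg _), mul_assoc]

end DerivMatAux

open DerivMatAux Finset in
/-- Derivative-matrix bound for `F(x) = ∏_{k=1}^K ⟨u^{(k)},x⟩²`
(Lemma `ext` of the paper). -/
theorem derivMat_product (n K : ℕ) (hK : 1 ≤ K) (u : Fin K → Fin n → ℝ) :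
    matOpNorm (derivMat (fun b => ∏ k, dotR (u k) (sgnVec b) ^ 2)) ≤
      2 * K * (2 * K - 1) * (n : ℝ) ^ (K - 1) * ∏ k, (∑ i, u k i ^ 2) := by
  classical
  have hS0 : ∀ k : Fin K, (0:ℝ) ≤ ∑ r, u k r ^ 2 :=
    fun k => Finset.sum_nonneg fun r _ => sq_nonneg _
  have hprod0 : ∀ (s : Finset (Fin K)), (0:ℝ) ≤ ∏ l ∈ s, (∑ r, u l r ^ 2) :=
    fun s => Finset.prod_nonneg fun l _ => hS0 l
  -- entrywise domination of the derivative matrix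
  have hDA : ∀ i j, derivMat (fun b => ∏ k, dotR (u k) (sgnVec b) ^ 2) i j
      ≤ ∑ p : Fin K × Fin K, coef u p.1 p.2 * |u p.1 i| * |u p.2 j| := by
    intro i j
    have : derivMat (fun b => ∏ k, dotR (u k) (sgnVec b) ^ 2) i j
        = ⨆ b : Fin n → Bool,
            |dderiv (dderiv (fun b => ∏ k, dotR (u k) (sgnVec b) ^ 2) j) i b| := rfl
    rw [this]
    refine ciSup_le fun b => ?_
    refine (entry_bound u i j b).trans (le_of_eq ?_)
    have diag : ∀ k : Fin K,
        (8 * |u k i| * |u k j|) * ∏ l ∈ Finset.univ.erase k, ((n : ℝ) * ∑ r, u l r ^ 2)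
          = 4 * (coef u k k * |u k i| * |u k j|) := by
      intro k
      rw [Finset.prod_mul_distrib, Finset.prod_const,
        Finset.card_erase_of_mem (Finset.mem_univ k), Finset.card_univ, Fintype.card_fin]
      unfold coef
      rw [if_pos rfl]
      ring
    have off : ∀ k : Fin K, ∀ m ∈ Finset.univ.erase k,
        (4 * |u k i| * (Real.sqrt n * Real.sqrt (∑ r, u k r ^ 2)))
          * (4 * |u m j| * (Real.sqrt n * Real.sqrt (∑ r, u m r ^ 2)))
          * ∏ l ∈ (Finset.univ.erase k).erase m, ((n : ℝ) * ∑ r, u l r ^ 2)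
          = 4 * (coef u k m * |u k i| * |u m j|) := by
      intro k m hm
      have hmk : m ≠ k := Finset.ne_of_mem_erase hm
      have hK2 : 2 ≤ K := by
        have h1 : Nontrivial (Fin K) := ⟨⟨m, k, hmk⟩⟩
        have h2 := Fintype.one_lt_card_iff_nontrivial.mpr h1
        exact (by simpa using h2 : 1 < K)
      have hcard : ((Finset.univ.erase k).erase m).card = K - 1 - 1 := by
        rw [Finset.card_erase_of_mem hm, Finset.card_erase_of_mem (Finset.mem_univ k),
          Finset.card_univ, Fintype.card_fin]
      have hpow : (n : ℝ) ^ (K - 1 - 1) * (n : ℝ) = (n : ℝ) ^ (K - 1) := by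
        rw [← pow_succ]
        congr 1
        omega
      have hn : Real.sqrt n * Real.sqrt n = (n : ℝ) := Real.mul_self_sqrt (Nat.cast_nonneg n)
      rw [Finset.prod_mul_distrib, Finset.prod_const, hcard]
      unfold coef
      rw [if_neg (fun h => hmk h.symm)]
      calc (4 * |u k i| * (Real.sqrt n * Real.sqrt (∑ r, u k r ^ 2)))
            * (4 * |u m j| * (Real.sqrt n * Real.sqrt (∑ r, u m r ^ 2)))
            * ((n : ℝ) ^ (K - 1 - 1) * ∏ l ∈ (Finset.univ.erase k).erase m, (∑ r, u l r ^ 2))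
          = ((n : ℝ) ^ (K - 1 - 1) * (Real.sqrt n * Real.sqrt n))
            * (16 * |u k i| * |u m j| * Real.sqrt (∑ r, u k r ^ 2)
                * Real.sqrt (∑ r, u m r ^ 2)
                * ∏ l ∈ (Finset.univ.erase k).erase m, (∑ r, u l r ^ 2)) := by ring
        _ = ((n : ℝ) ^ (K - 1))
            * (16 * |u k i| * |u m j| * Real.sqrt (∑ r, u k r ^ 2)
                * Real.sqrt (∑ r, u m r ^ 2)
                * ∏ l ∈ (Finset.univ.erase k).erase m, (∑ r, u l r ^ 2)) := by
              rw [hn, hpow]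
        _ = 4 * (4 * (n : ℝ) ^ (K - 1) * Real.sqrt (∑ r, u k r ^ 2)
                * Real.sqrt (∑ r, u m r ^ 2)
                * (∏ l ∈ (Finset.univ.erase k).erase m, (∑ r, u l r ^ 2))
                * |u k i| * |u m j|) := by ring
    have e1 : ∑ k, (8 * |u k i| * |u k j|)
          * ∏ l ∈ Finset.univ.erase k, ((n : ℝ) * ∑ r, u l r ^ 2)
        = ∑ k, 4 * (coef u k k * |u k i| * |u k j|) :=
      Finset.sum_congr rfl fun k _ => diag k
    have e2 : ∑ k, ∑ m ∈ Finset.univ.erase k,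
          (4 * |u k i| * (Real.sqrt n * Real.sqrt (∑ r, u k r ^ 2)))
          * (4 * |u m j| * (Real.sqrt n * Real.sqrt (∑ r, u m r ^ 2)))
          * ∏ l ∈ (Finset.univ.erase k).erase m, ((n : ℝ) * ∑ r, u l r ^ 2)
        = ∑ k, ∑ m ∈ Finset.univ.erase k, 4 * (coef u k m * |u k i| * |u m j|) :=
      Finset.sum_congr rfl fun k _ => Finset.sum_congr rfl fun m hm => off k m hm
    rw [e1, e2, Fintype.sum_prod_type]
    have e3 : ∀ k : Fin K, ∑ m, coef u k m * |u k i| * |u m j|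
        = coef u k k * |u k i| * |u k j|
          + ∑ m ∈ Finset.univ.erase k, coef u k m * |u k i| * |u m j| :=
      fun k => (Finset.add_sum_erase _ _ (Finset.mem_univ k)).symm
    rw [Finset.sum_congr rfl fun k _ => e3 k]
    rw [Finset.sum_add_distrib]
    have e4 : ∑ k, 4 * (coef u k k * |u k i| * |u k j|)
        = 4 * ∑ k, coef u k k * |u k i| * |u k j| := by rw [Finset.mul_sum]
    have e5 : ∑ k, ∑ m ∈ Finset.univ.erase k, 4 * (coef u k m * |u k i| * |u m j|)
        = 4 * ∑ k, ∑ m ∈ Finset.univ.erase k, coef u k m * |u k i| * |u m j| := by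
      rw [Finset.mul_sum]
      exact Finset.sum_congr rfl fun k _ => by rw [Finset.mul_sum]
    rw [e4, e5]
    ring
  -- nonnegativity of the derivative matrix
  have hD0 : ∀ i j, 0 ≤ derivMat (fun b => ∏ k, dotR (u k) (sgnVec b) ^ 2) i j := by
    intro i j
    have hbdd : BddAbove (Set.range fun b : Fin n → Bool =>
        |dderiv (dderiv (fun b => ∏ k, dotR (u k) (sgnVec b) ^ 2) j) i b|) :=
      Set.Finite.bddAbove (Set.finite_range _)
    exact le_trans (abs_nonneg _) (le_ciSup hbdd (fun _ => false))
  -- now the chain of inequalities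
  calc matOpNorm (derivMat (fun b => ∏ k, dotR (u k) (sgnVec b) ^ 2))
      ≤ Real.sqrt (∑ i, ∑ j, derivMat (fun b => ∏ k, dotR (u k) (sgnVec b) ^ 2) i j ^ 2) :=
        opNorm_le_frob _
    _ ≤ Real.sqrt (∑ i, ∑ j, (∑ p : Fin K × Fin K, coef u p.1 p.2 * |u p.1 i| * |u p.2 j|) ^ 2) := by
        apply Real.sqrt_le_sqrt
        refine Finset.sum_le_sum fun i _ => Finset.sum_le_sum fun j _ => ?_
        exact pow_le_pow_left₀ (hD0 i j) (hDA i j) 2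
    
    _ = Real.sqrt (∑ q : Fin n × Fin n,
          (∑ p : Fin K × Fin K, coef u p.1 p.2 * |u p.1 q.1| * |u p.2 q.2|) ^ 2) := by
        rw [Fintype.sum_prod_type]
    _ ≤ ∑ p : Fin K × Fin K, Real.sqrt (∑ q : Fin n × Fin n,
          (coef u p.1 p.2 * |u p.1 q.1| * |u p.2 q.2|) ^ 2) := by
        have := minkowski (ι := Fin n × Fin n) (Finset.univ (α := Fin K × Fin K))
          (fun p q => coef u p.1 p.2 * |u p.1 q.1| * |u p.2 q.2|)
        exact this
    _ = ∑ p : Fin K × Fin K, coef u p.1 p.2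
          * Real.sqrt (∑ r, u p.1 r ^ 2) * Real.sqrt (∑ r, u p.2 r ^ 2) :=
        Finset.sum_congr rfl fun p _ => sqrt_sum_rankone u p.1 p.2
    _ = 2 * K * (2 * K - 1) * (n : ℝ) ^ (K - 1) * ∏ k, (∑ i, u k i ^ 2) := by
        rw [Fintype.sum_prod_type]
        have diagval : ∀ k : Fin K,
            coef u k k * Real.sqrt (∑ r, u k r ^ 2) * Real.sqrt (∑ r, u k r ^ 2)
              = 2 * (n : ℝ) ^ (K - 1) * ∏ l, (∑ r, u l r ^ 2) := by
          intro k
          unfold coef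
          rw [if_pos rfl, mul_assoc, Real.mul_self_sqrt (hS0 k), mul_assoc,
            mul_assoc]
          rw [show (∏ l ∈ Finset.univ.erase k, (∑ r, u l r ^ 2)) * (∑ r, u k r ^ 2)
              = ∏ l, (∑ r, u l r ^ 2) from Finset.prod_erase_mul _ _ (Finset.mem_univ k)]
          ring
        have offval : ∀ k : Fin K, ∀ m ∈ Finset.univ.erase k,
            coef u k m * Real.sqrt (∑ r, u k r ^ 2) * Real.sqrt (∑ r, u m r ^ 2)
              = 4 * (n : ℝ) ^ (K - 1) * ∏ l, (∑ r, u l r ^ 2) := by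
          intro k m hm
          have hmk : m ≠ k := Finset.ne_of_mem_erase hm
          unfold coef
          rw [if_neg (fun h => hmk h.symm)]
          calc 4 * (n : ℝ) ^ (K - 1) * Real.sqrt (∑ r, u k r ^ 2)
                * Real.sqrt (∑ r, u m r ^ 2)
                * (∏ l ∈ (Finset.univ.erase k).erase m, (∑ r, u l r ^ 2))
                * Real.sqrt (∑ r, u k r ^ 2) * Real.sqrt (∑ r, u m r ^ 2)
              = 4 * (n : ℝ) ^ (K - 1)
                * ((Real.sqrt (∑ r, u k r ^ 2) * Real.sqrt (∑ r, u k r ^ 2))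
                  * ((Real.sqrt (∑ r, u m r ^ 2) * Real.sqrt (∑ r, u m r ^ 2))
                    * ∏ l ∈ (Finset.univ.erase k).erase m, (∑ r, u l r ^ 2))) := by ring
            _ = 4 * (n : ℝ) ^ (K - 1)
                * ((∑ r, u k r ^ 2) * ((∑ r, u m r ^ 2)
                    * ∏ l ∈ (Finset.univ.erase k).erase m, (∑ r, u l r ^ 2))) := by
                  rw [Real.mul_self_sqrt (hS0 k), Real.mul_self_sqrt (hS0 m)]
            _ = 4 * (n : ℝ) ^ (K - 1) * ∏ l, (∑ r, u l r ^ 2) := by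
                  rw [show (∑ r, u m r ^ 2)
                        * ∏ l ∈ (Finset.univ.erase k).erase m, (∑ r, u l r ^ 2)
                      = ∏ l ∈ Finset.univ.erase k, (∑ r, u l r ^ 2) from
                    Finset.mul_prod_erase (Finset.univ.erase k) (fun l => ∑ r, u l r ^ 2) hm,
                    show (∑ r, u k r ^ 2) * ∏ l ∈ Finset.univ.erase k, (∑ r, u l r ^ 2)
                      = ∏ l, (∑ r, u l r ^ 2) from
                    Finset.mul_prod_erase Finset.univ (fun l => ∑ r, u l r ^ 2) (Finset.mem_univ k)]
        have e3 : ∀ k : Fin K,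
            ∑ m, coef u k m * Real.sqrt (∑ r, u k r ^ 2) * Real.sqrt (∑ r, u m r ^ 2)
            = 2 * (n : ℝ) ^ (K - 1) * ∏ l, (∑ r, u l r ^ 2)
              + (K - 1 : ℕ) * (4 * (n : ℝ) ^ (K - 1) * ∏ l, (∑ r, u l r ^ 2)) := by
          intro k
          rw [← Finset.add_sum_erase _ _ (Finset.mem_univ k), diagval k]
          congr 1
          rw [Finset.sum_congr rfl (offval k), Finset.sum_const,
            Finset.card_erase_of_mem (Finset.mem_univ k), Finset.card_univ, Fintype.card_fin,
            nsmul_eq_mul]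
        rw [Finset.sum_congr rfl fun k _ => e3 k, Finset.sum_const, Finset.card_univ,
          Fintype.card_fin, nsmul_eq_mul]
        have hcast : ((K - 1 : ℕ) : ℝ) = (K : ℝ) - 1 := by
          rw [Nat.cast_sub hK, Nat.cast_one]
        rw [hcast]
        ring

end
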